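/- Let a finite-horizon MDP with real-valued reward be given. For every policy π, the goal-conditioned update improves all soft values: V^{G(π)}_t(s) ≥ V^π_t(s) for every t ≤ T and every state s. Consequently, for any prior policy p, the success probabilities of the control-as-inference sequence are monotone: P(π^G_{i+1}) ≥ P(π^G_i) for every i ≥ 0. -/

import Mathlib

open scoped BigOperators ENNReal

/-- A finite-horizon MDP: finite nonempty state and action types, transition kernel,
initial distribution, horizon `T` (time steps `0,…,T`), and non-positive real reward. -/
structure MDP where
  S : Type
  A : Type
  [fintS : Fintype S]
  [fintA : Fintype A]
  [deceqS : DecidableEq S]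
  [deceqA : DecidableEq A]
  [noneS : Nonempty S]
  [noneA : Nonempty A]
  tk : S → A → PMF S
  init : PMF S
  T : ℕ
  r : S → A → ℝ
  r_nonpos : ∀ s a, r s a ≤ 0

attribute [instance] MDP.fintS MDP.fintA MDP.deceqS MDP.deceqA MDP.noneS MDP.noneA

/-- A policy: a family of action distributions, one for each time step and state. -/
abbrev MDP.Policy (M : MDP) : Type := ℕ → M.S → PMF M.A

/-- Deterministic transitions: every `τ(s,a)` is a point mass. -/
def MDP.Det (M : MDP) : Prop := ∀ s a, ∃ s', M.tk s a = PMF.pure s'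

/-- Soft `Q` for a (possibly time-indexed) reward `r'`, indexed by the number of remaining
steps `k` (so that the actual time is `M.T - k`):
`Q_T(s,a) = r'_T(s,a)` and, for `t < T`,
`Q_t(s,a) = r'_t(s,a) + log E_{s'∼τ(s,a)}[exp V_{t+1}(s')]` with
`V_t(s) = log E_{a∼π_t(s)}[exp Q_t(s,a)]`. -/
noncomputable def QrevR (M : MDP) (r' : ℕ → M.S → M.A → ℝ) (π : M.Policy) :
    ℕ → M.S → M.A → ℝ
  | 0 => fun s a => r' M.T s a
  | (k+1) => fun s a => r' (M.T - (k+1)) s a +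
      Real.log (∑ s' : M.S, (M.tk s a s').toReal *
        Real.exp (Real.log (∑ a' : M.A, ((π (M.T - k) s') a').toReal *
          Real.exp (QrevR M r' π k s' a'))))

/-- Soft `Q^{π,r'}_t` at actual time `t`. -/
noncomputable def softQR (M : MDP) (r' : ℕ → M.S → M.A → ℝ) (π : M.Policy)
    (t : ℕ) : M.S → M.A → ℝ :=
  QrevR M r' π (M.T - t)

/-- Soft `Q^π_t` for the MDP's own reward. -/
noncomputable def softQ (M : MDP) (π : M.Policy) (t : ℕ) : M.S → M.A → ℝ :=
  softQR M (fun _ => M.r) π t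

/-- Soft `V^π_t(s) = log E_{a∼π_t(s)}[exp Q^π_t(s,a)]`. -/
noncomputable def softV (M : MDP) (π : M.Policy) (t : ℕ) (s : M.S) : ℝ :=
  Real.log (∑ a : M.A, ((π t s) a).toReal * Real.exp (softQ M π t s a))

/-- A trajectory `ξ = (s_0,…,s_T, a_0,…,a_T)`. -/
abbrev MDP.Traj (M : MDP) : Type := (Fin (M.T + 1) → M.S) × (Fin (M.T + 1) → M.A)

/-- The probability of a trajectory under policy `π`:
`s_0 ∼ μ`, `a_t ∼ π_t(s_t)`, `s_{t+1} ∼ τ(s_t,a_t)`. -/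
noncomputable def trajP (M : MDP) (π : M.Policy) (ξ : M.Traj) : ℝ≥0∞ :=
  M.init (ξ.1 0) * (∏ t : Fin (M.T + 1), (π t.val (ξ.1 t)) (ξ.2 t)) *
    ∏ t : Fin M.T, (M.tk (ξ.1 t.castSucc) (ξ.2 t.castSucc)) (ξ.1 t.succ)

open Classical in
/-- Kullback–Leibler divergence between two probability mass functions on a finite type,
valued in `[0,∞]`. -/
noncomputable def KLfin {α : Type} [Fintype α] (q p : α → ℝ≥0∞) : ℝ≥0∞ :=
  if ∀ a, p a = 0 → q a = 0 then
    ENNReal.ofReal (∑ a : α, (q a).toReal * Real.log ((q a).toReal / (p a).toReal))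
  else ⊤

/-- Occupancy measure: the probability that the state at time `t` is `s` under `p_π`. -/
noncomputable def occ (M : MDP) (π : M.Policy) (t : Fin (M.T + 1)) (s : M.S) : ℝ≥0∞ :=
  ∑ ξ : M.Traj, if ξ.1 t = s then trajP M π ξ else 0

/-- The return `J(π) = E_{ξ∼p_π}[Σ_t r(s_t,a_t)]`. -/
noncomputable def Jret (M : MDP) (π : M.Policy) : ℝ :=
  ∑ ξ : M.Traj, (trajP M π ξ).toReal * ∑ t : Fin (M.T + 1), M.r (ξ.1 t) (ξ.2 t)

/-- Success probability `P(π) = E_{ξ∼p_π}[∏_t exp r(s_t,a_t)]`. -/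
noncomputable def successP (M : MDP) (π : M.Policy) : ℝ :=
  ∑ ξ : M.Traj, (trajP M π ξ).toReal * ∏ t : Fin (M.T + 1), Real.exp (M.r (ξ.1 t) (ξ.2 t))

/-- Normalisation of a nonzero, finite weight function on a finite type into a `PMF`. -/
noncomputable def normPMF {α : Type} [Fintype α] (f : α → ℝ≥0∞)
    (h0 : ∃ a, f a ≠ 0) (hfin : ∀ a, f a ≠ ∞) : PMF α :=
  PMF.normalize f
    (fun h => by obtain ⟨a, ha⟩ := h0; exact ha (ENNReal.tsum_eq_zero.mp h a))
    (by
      rw [tsum_fintype]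
      exact (ENNReal.sum_lt_top.mpr fun a _ => (hfin a).lt_top).ne)

/-- The control-as-inference operator:
`G(π)_t(a|s) ∝ π_t(a|s)·exp(Q^π_t(s,a))`. -/
noncomputable def Gop (M : MDP) (π : M.Policy) : M.Policy := fun t s =>
  normPMF (fun a => (π t s) a * ENNReal.ofReal (Real.exp (softQ M π t s a)))
    (by
      obtain ⟨a, ha⟩ := (π t s).support_nonempty
      exact ⟨a, mul_ne_zero (((π t s).mem_support_iff a).mp ha)
        (ENNReal.ofReal_pos.mpr (Real.exp_pos _)).ne'⟩)
    (fun a => ENNReal.mul_ne_top (PMF.apply_ne_top _ _) ENNReal.ofReal_ne_top)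

/-- The control-as-inference sequence: `π^G_0 = p`, `π^G_{i+1} = G(π^G_i)`. -/
noncomputable def Gseq (M : MDP) (p : M.Policy) : ℕ → M.Policy
  | 0 => p
  | (k+1) => Gop M (Gseq M p k)

/-- The Boltzmann policy `π^δ_t(a|s) ∝ exp(Q^π_t(s,a)/δ)`. -/
noncomputable def Boltz (M : MDP) (π : M.Policy) (δ : ℝ) : M.Policy := fun t s =>
  normPMF (fun a => ENNReal.ofReal (Real.exp (softQ M π t s a / δ)))
    ⟨Classical.arbitrary M.A, (ENNReal.ofReal_pos.mpr (Real.exp_pos _)).ne'⟩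
    (fun _ => ENNReal.ofReal_ne_top)

/-- Boltzmann incoherence `κ_δ(π) = KL(p_π ‖ p_{π^δ})`. -/
noncomputable def kappaDelta (M : MDP) (π : M.Policy) (δ : ℝ) : ℝ≥0∞ :=
  KLfin (trajP M π) (trajP M (Boltz M π δ))

/-! ### Auxiliary machinery for stmt12 -/

lemma pmf_sum_toReal {α : Type} [Fintype α] (p : PMF α) :
    ∑ a : α, (p a).toReal = 1 := by
  have h : (∑ a : α, p a) = 1 := by rw [← p.tsum_coe, tsum_fintype]
  rw [← ENNReal.toReal_sum (fun a _ => PMF.apply_ne_top p a), h, ENNReal.toReal_one]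

lemma pmf_weight_pos {α : Type} [Fintype α] (p : PMF α) (f : α → ℝ)
    (hf : ∀ a, 0 < f a) : 0 < ∑ a : α, (p a).toReal * f a := by
  obtain ⟨a0, ha0⟩ := p.support_nonempty
  refine Finset.sum_pos' (fun a _ => mul_nonneg ENNReal.toReal_nonneg (hf a).le)
    ⟨a0, Finset.mem_univ _, ?_⟩
  exact mul_pos (ENNReal.toReal_pos ((p.mem_support_iff a0).mp ha0)
    (PMF.apply_ne_top p a0)) (hf a0)

/-- The weighted-exponential value `W_k(s) = Σ_a π_{T-k}(a|s) exp(Q_k(s,a))`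
(so that `exp V_{T-k}(s) = W_k(s)`). -/
noncomputable def WQ (M : MDP) (π : M.Policy) (k : ℕ) (s : M.S) : ℝ :=
  ∑ a : M.A, ((π (M.T - k) s) a).toReal * Real.exp (QrevR M (fun _ => M.r) π k s a)

lemma WQ_pos (M : MDP) (π : M.Policy) (k : ℕ) (s : M.S) : 0 < WQ M π k s :=
  pmf_weight_pos _ _ (fun _ => Real.exp_pos _)

lemma QrevR_succ (M : MDP) (π : M.Policy) (k : ℕ) (s : M.S) (a : M.A) :
    QrevR M (fun _ => M.r) π (k+1) s a =
      M.r s a + Real.log (∑ s' : M.S, ((M.tk s a) s').toReal * WQ M π k s') := by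
  show M.r s a + _ = _
  congr 2
  refine Finset.sum_congr rfl fun s' _ => ?_
  congr 1
  exact Real.exp_log (WQ_pos M π k s')

lemma tkW_pos (M : MDP) (π : M.Policy) (k : ℕ) (s : M.S) (a : M.A) :
    0 < ∑ s' : M.S, ((M.tk s a) s').toReal * WQ M π k s' :=
  pmf_weight_pos _ _ (WQ_pos M π k)

lemma WQ_succ (M : MDP) (π : M.Policy) (k : ℕ) (s : M.S) :
    WQ M π (k+1) s = ∑ a : M.A, ((π (M.T - (k+1)) s) a).toReal * Real.exp (M.r s a) *
      ∑ s' : M.S, ((M.tk s a) s').toReal * WQ M π k s' := by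
  have hdef : WQ M π (k+1) s = ∑ a : M.A, ((π (M.T - (k+1)) s) a).toReal *
      Real.exp (QrevR M (fun _ => M.r) π (k+1) s a) := rfl
  rw [hdef]
  refine Finset.sum_congr rfl fun a _ => ?_
  rw [QrevR_succ, Real.exp_add, Real.exp_log (tkW_pos M π k s a), mul_assoc]

lemma Gop_toReal (M : MDP) (π : M.Policy) (t : ℕ) (s : M.S) (a : M.A) :
    ((Gop M π t s) a).toReal =
      (π t s a).toReal * Real.exp (softQ M π t s a) /
        ∑ b : M.A, (π t s b).toReal * Real.exp (softQ M π t s b) := by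
  unfold Gop normPMF
  rw [PMF.normalize_apply]
  have hts : (∑' b : M.A, (π t s) b * ENNReal.ofReal (Real.exp (softQ M π t s b))) =
      ∑ b : M.A, (π t s) b * ENNReal.ofReal (Real.exp (softQ M π t s b)) :=
    tsum_fintype _
  rw [hts, ENNReal.toReal_mul, ENNReal.toReal_inv,
    ENNReal.toReal_sum (fun b _ =>
      ENNReal.mul_ne_top (PMF.apply_ne_top _ _) ENNReal.ofReal_ne_top)]
  simp only [ENNReal.toReal_mul, ENNReal.toReal_ofReal (Real.exp_nonneg _)]
  rw [div_eq_mul_inv]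

lemma cs_ineq {α : Type} [Fintype α] (w x : α → ℝ) (hw : ∀ a, 0 ≤ w a)
    (hw1 : ∑ a : α, w a = 1) :
    (∑ a : α, w a * x a) ^ 2 ≤ ∑ a : α, w a * x a ^ 2 := by
  have h := Finset.sum_mul_sq_le_sq_mul_sq Finset.univ
    (fun a => Real.sqrt (w a)) (fun a => Real.sqrt (w a) * x a)
  have e1 : ∀ a : α, Real.sqrt (w a) * (Real.sqrt (w a) * x a) = w a * x a := by
    intro a; rw [← mul_assoc, Real.mul_self_sqrt (hw a)]
  have e2 : ∀ a : α, Real.sqrt (w a) ^ 2 = w a := fun a => Real.sq_sqrt (hw a)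
  have e3 : ∀ a : α, (Real.sqrt (w a) * x a) ^ 2 = w a * x a ^ 2 := by
    intro a; rw [mul_pow, e2]
  simp only [e1, e2, e3] at h
  rwa [hw1, one_mul] at h

lemma Wle (M : MDP) (π : M.Policy) (k : ℕ) (hk : k ≤ M.T)
    (hQ : ∀ s a, QrevR M (fun _ => M.r) π k s a ≤ QrevR M (fun _ => M.r) (Gop M π) k s a) :
    ∀ s : M.S, WQ M π k s ≤ WQ M (Gop M π) k s := by
  intro s
  set w : M.A → ℝ := fun a => ((π (M.T - k) s) a).toReal with hw
  set x : M.A → ℝ := fun a => Real.exp (QrevR M (fun _ => M.r) π k s a) with hx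
  have hxpos : ∀ a, 0 < x a := fun a => Real.exp_pos _
  have hZ : (0:ℝ) < ∑ a : M.A, w a * x a := WQ_pos M π k s
  have hG : ∀ a : M.A, ((Gop M π (M.T - k) s) a).toReal =
      w a * x a / (∑ b : M.A, w b * x b) := by
    intro a
    rw [Gop_toReal]
    unfold softQ softQR
    rw [Nat.sub_sub_self hk]
  have step1 : (∑ a : M.A, w a * x a) ≤
      ∑ a : M.A, ((Gop M π (M.T - k) s) a).toReal * x a := by
    have hcs := cs_ineq w x (fun a => ENNReal.toReal_nonneg) (pmf_sum_toReal _)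
    have hrw : (∑ a : M.A, ((Gop M π (M.T - k) s) a).toReal * x a) =
        (∑ a : M.A, w a * x a ^ 2) / (∑ b : M.A, w b * x b) := by
      rw [Finset.sum_div]
      refine Finset.sum_congr rfl fun a _ => ?_
      rw [hG a]; ring
    rw [hrw, le_div_iff₀ hZ, ← sq]
    exact hcs
  have step2 : (∑ a : M.A, ((Gop M π (M.T - k) s) a).toReal * x a) ≤
      WQ M (Gop M π) k s := by
    unfold WQ
    refine Finset.sum_le_sum fun a _ => ?_
    exact mul_le_mul_of_nonneg_left (Real.exp_le_exp.mpr (hQ s a)) ENNReal.toReal_nonneg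
  exact le_trans step1 step2

lemma Qmono (M : MDP) (π : M.Policy) :
    ∀ k : ℕ, k ≤ M.T → ∀ (s : M.S) (a : M.A),
      QrevR M (fun _ => M.r) π k s a ≤ QrevR M (fun _ => M.r) (Gop M π) k s a := by
  intro k
  induction k with
  | zero => intro _ s a; exact le_refl _
  | succ k ih =>
    intro hk s a
    have hk' : k ≤ M.T := Nat.le_of_succ_le hk
    have hW := Wle M π k hk' (ih hk')
    rw [QrevR_succ, QrevR_succ]
    refine add_le_add (le_refl _) ?_
    refine Real.log_le_log (tkW_pos M π k s a) ?_
    refine Finset.sum_le_sum fun s' _ => ?_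
    exact mul_le_mul_of_nonneg_left (hW s') ENNReal.toReal_nonneg

/-- Forward success recursion with time offset `t0` and `k` remaining steps. -/
noncomputable def Ff (M : MDP) (π : M.Policy) : ℕ → ℕ → M.S → ℝ
  | t0, 0 => fun s => ∑ a : M.A, ((π t0 s) a).toReal * Real.exp (M.r s a)
  | t0, (k+1) => fun s => ∑ a : M.A, ((π t0 s) a).toReal * Real.exp (M.r s a) *
      ∑ s' : M.S, ((M.tk s a) s').toReal * Ff M π (t0+1) k s'

lemma Ff_eq_WQ (M : MDP) (π : M.Policy) :
    ∀ k : ℕ, k ≤ M.T → ∀ s : M.S, Ff M π (M.T - k) k s = WQ M π k s := by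
  intro k
  induction k with
  | zero => intro _ s; rfl
  | succ k ih =>
    intro hk s
    have harith : M.T - (k+1) + 1 = M.T - k := by omega
    rw [WQ_succ]
    show (∑ a : M.A, ((π (M.T - (k+1)) s) a).toReal * Real.exp (M.r s a) *
      ∑ s' : M.S, ((M.tk s a) s').toReal * Ff M π (M.T - (k+1) + 1) k s') = _
    rw [harith]
    refine Finset.sum_congr rfl fun a _ => ?_
    congr 1
    refine Finset.sum_congr rfl fun s' _ => ?_
    rw [ih (Nat.le_of_succ_le hk) s']

lemma traj_sum (M : MDP) (π : M.Policy) :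
    ∀ (n t0 : ℕ) (ν : M.S → ℝ),
    (∑ σ : Fin (n+1) → M.S, ∑ α : Fin (n+1) → M.A,
      ν (σ 0) * ((∏ t : Fin (n+1),
          ((π (t0 + t.val) (σ t)) (α t)).toReal * Real.exp (M.r (σ t) (α t))) *
        ∏ t : Fin n, ((M.tk (σ t.castSucc) (α t.castSucc)) (σ t.succ)).toReal))
    = ∑ s : M.S, ν s * Ff M π t0 n s := by
  intro n
  induction n with
  | zero =>
    intro t0 ν
    rw [← Equiv.sum_comp (Equiv.funUnique (Fin 1) M.S).symm]
    refine Finset.sum_congr rfl fun s _ => ?_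
    rw [← Equiv.sum_comp (Equiv.funUnique (Fin 1) M.A).symm]
    simp [Ff, Finset.mul_sum, Fin.prod_univ_succ, Equiv.funUnique]
  | succ n ih =>
    intro t0 ν
    rw [← Equiv.sum_comp (Fin.consEquiv (fun _ : Fin (n+2) => M.S))]
    rw [Fintype.sum_prod_type]
    have key : ∀ (s : M.S) (σ' : Fin (n+1) → M.S),
        (∑ α : Fin (n+2) → M.A,
          ν ((Fin.consEquiv (fun _ : Fin (n+2) => M.S)) (s, σ') 0) *
          ((∏ t : Fin (n+2), ((π (t0 + t.val)
              ((Fin.consEquiv (fun _ : Fin (n+2) => M.S)) (s, σ') t)) (α t)).toReal *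
            Real.exp (M.r ((Fin.consEquiv (fun _ : Fin (n+2) => M.S)) (s, σ') t) (α t))) *
          ∏ t : Fin (n+1), ((M.tk ((Fin.consEquiv (fun _ : Fin (n+2) => M.S)) (s, σ') t.castSucc)
              (α t.castSucc)) ((Fin.consEquiv (fun _ : Fin (n+2) => M.S)) (s, σ') t.succ)).toReal))
        = ∑ a : M.A, ∑ α' : Fin (n+1) → M.A,
            ν s * (((π t0 s) a).toReal * Real.exp (M.r s a)) *
            ((M.tk s a) (σ' 0)).toReal *
            ((∏ t : Fin (n+1), ((π (t0 + 1 + t.val) (σ' t)) (α' t)).toReal *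
                Real.exp (M.r (σ' t) (α' t))) *
              ∏ t : Fin n, ((M.tk (σ' t.castSucc) (α' t.castSucc)) (σ' t.succ)).toReal) := by
      intro s σ'
      rw [← Equiv.sum_comp (Fin.consEquiv (fun _ : Fin (n+2) => M.A))]
      rw [Fintype.sum_prod_type]
      refine Finset.sum_congr rfl fun a _ => Finset.sum_congr rfl fun α' _ => ?_
      simp only [Fin.consEquiv_apply]
      have hP : (∏ t : Fin (n+2),
            ((π (t0 + t.val) ((Fin.cons s σ' : ∀ _ : Fin (n+2), M.S) t))
                ((Fin.cons a α' : ∀ _ : Fin (n+2), M.A) t)).toReal *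
              Real.exp (M.r ((Fin.cons s σ' : ∀ _ : Fin (n+2), M.S) t)
                ((Fin.cons a α' : ∀ _ : Fin (n+2), M.A) t)))
          = (((π t0 s) a).toReal * Real.exp (M.r s a)) *
            ∏ t : Fin (n+1), ((π (t0 + 1 + t.val) (σ' t)) (α' t)).toReal *
              Real.exp (M.r (σ' t) (α' t)) := by
        rw [Fin.prod_univ_succ]
        simp only [Fin.cons_zero, Fin.cons_succ, Fin.val_zero, Nat.add_zero, Fin.val_succ]
        congr 1
        refine Finset.prod_congr rfl fun t _ => ?_
        have htime : t0 + (t.val + 1) = t0 + 1 + t.val := by omega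
        rw [htime]
      have hT : (∏ t : Fin (n+1),
            ((M.tk ((Fin.cons s σ' : ∀ _ : Fin (n+2), M.S) t.castSucc)
                ((Fin.cons a α' : ∀ _ : Fin (n+2), M.A) t.castSucc))
              ((Fin.cons s σ' : ∀ _ : Fin (n+2), M.S) t.succ)).toReal)
          = ((M.tk s a) (σ' 0)).toReal *
            ∏ t : Fin n, ((M.tk (σ' t.castSucc) (α' t.castSucc)) (σ' t.succ)).toReal := by
        rw [Fin.prod_univ_succ]
        simp only [Fin.castSucc_zero, Fin.cons_zero, Fin.cons_succ]
        congr 1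
      rw [hP, hT, Fin.cons_zero]
      ring
    calc _ = ∑ s : M.S, ∑ σ' : Fin (n+1) → M.S, ∑ a : M.A, ∑ α' : Fin (n+1) → M.A,
            ν s * (((π t0 s) a).toReal * Real.exp (M.r s a)) *
            ((M.tk s a) (σ' 0)).toReal *
            ((∏ t : Fin (n+1), ((π (t0 + 1 + t.val) (σ' t)) (α' t)).toReal *
                Real.exp (M.r (σ' t) (α' t))) *
              ∏ t : Fin n, ((M.tk (σ' t.castSucc) (α' t.castSucc)) (σ' t.succ)).toReal) := by
          refine Finset.sum_congr rfl fun s _ => Finset.sum_congr rfl fun σ' _ => ?_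
          exact key s σ'
      _ = ∑ s : M.S, ν s * Ff M π t0 (n+1) s := by
          refine Finset.sum_congr rfl fun s _ => ?_
          rw [Finset.sum_comm]
          show (∑ a : M.A, ∑ σ' : Fin (n+1) → M.S, ∑ α' : Fin (n+1) → M.A, _) = _
          have inner : ∀ a : M.A,
              (∑ σ' : Fin (n+1) → M.S, ∑ α' : Fin (n+1) → M.A,
                ν s * (((π t0 s) a).toReal * Real.exp (M.r s a)) *
                ((M.tk s a) (σ' 0)).toReal *
                ((∏ t : Fin (n+1), ((π (t0 + 1 + t.val) (σ' t)) (α' t)).toReal *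
                    Real.exp (M.r (σ' t) (α' t))) *
                  ∏ t : Fin n, ((M.tk (σ' t.castSucc) (α' t.castSucc)) (σ' t.succ)).toReal))
              = ν s * (((π t0 s) a).toReal * Real.exp (M.r s a)) *
                  ∑ s' : M.S, ((M.tk s a) s').toReal * Ff M π (t0+1) n s' := by
            intro a
            have hih := ih (t0+1) (fun s'' => ((M.tk s a) s'').toReal)
            rw [← hih, Finset.mul_sum]
            refine Finset.sum_congr rfl fun σ' _ => ?_
            rw [Finset.mul_sum]
            refine Finset.sum_congr rfl fun α' _ => ?_
            ring
          simp only [inner]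
          show _ = ν s * Ff M π t0 (n+1) s
          rw [show Ff M π t0 (n+1) s = ∑ a : M.A, ((π t0 s) a).toReal * Real.exp (M.r s a) *
            ∑ s' : M.S, ((M.tk s a) s').toReal * Ff M π (t0+1) n s' from rfl]
          rw [Finset.mul_sum]
          refine Finset.sum_congr rfl fun a _ => ?_
          ring

lemma successP_eq (M : MDP) (π : M.Policy) :
    successP M π = ∑ s : M.S, (M.init s).toReal * Ff M π 0 M.T s := by
  rw [← traj_sum M π M.T 0 (fun s => (M.init s).toReal)]
  unfold successP trajP
  rw [show (∑ ξ : M.Traj, (M.init (ξ.1 0) * (∏ t : Fin (M.T + 1), (π t.val (ξ.1 t)) (ξ.2 t)) *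
      ∏ t : Fin M.T, (M.tk (ξ.1 t.castSucc) (ξ.2 t.castSucc)) (ξ.1 t.succ)).toReal *
      ∏ t : Fin (M.T + 1), Real.exp (M.r (ξ.1 t) (ξ.2 t))) =
    ∑ σ : Fin (M.T+1) → M.S, ∑ α : Fin (M.T+1) → M.A,
      (M.init (σ 0) * (∏ t : Fin (M.T + 1), (π t.val (σ t)) (α t)) *
      ∏ t : Fin M.T, (M.tk (σ t.castSucc) (α t.castSucc)) (σ t.succ)).toReal *
      ∏ t : Fin (M.T + 1), Real.exp (M.r (σ t) (α t)) from
    Fintype.sum_prod_type _]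
  refine Finset.sum_congr rfl fun σ _ => Finset.sum_congr rfl fun α _ => ?_
  rw [ENNReal.toReal_mul, ENNReal.toReal_mul, ENNReal.toReal_prod, ENNReal.toReal_prod]
  simp only [zero_add]
  rw [Finset.prod_mul_distrib]
  ring

lemma successP_eq_WQ (M : MDP) (π : M.Policy) :
    successP M π = ∑ s : M.S, (M.init s).toReal * WQ M π M.T s := by
  rw [successP_eq]
  refine Finset.sum_congr rfl fun s _ => ?_
  rw [show (0:ℕ) = M.T - M.T from (Nat.sub_self M.T).symm, Ff_eq_WQ M π M.T le_rfl s]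

/-- the goal-conditioned update improves all soft values,
`V^{G(π)}_t(s) ≥ V^π_t(s)` for every `t ≤ T` and state `s`; consequently the success
probabilities of the control-as-inference sequence are monotone:
`P(π^G_{i+1}) ≥ P(π^G_i)` for every prior `p` and every `i`. -/
theorem stmt12 (M : MDP) (π : M.Policy) :
    (∀ t ≤ M.T, ∀ s : M.S, softV M π t s ≤ softV M (Gop M π) t s) ∧
    (∀ p : M.Policy, ∀ i : ℕ, successP M (Gseq M p i) ≤ successP M (Gseq M p (i + 1))) := by
  constructor
  · intro t ht s
    have h1 : softV M π t s = Real.log (WQ M π (M.T - t) s) := by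
      unfold softV WQ softQ softQR
      rw [Nat.sub_sub_self ht]
    have h2 : softV M (Gop M π) t s = Real.log (WQ M (Gop M π) (M.T - t) s) := by
      unfold softV WQ softQ softQR
      rw [Nat.sub_sub_self ht]
    rw [h1, h2]
    exact Real.log_le_log (WQ_pos M π (M.T - t) s)
      (Wle M π (M.T - t) (Nat.sub_le _ _) (Qmono M π (M.T - t) (Nat.sub_le _ _)) s)
  · intro p i
    have hGs : Gseq M p (i+1) = Gop M (Gseq M p i) := rfl
    rw [hGs, successP_eq_WQ, successP_eq_WQ]
    refine Finset.sum_le_sum fun s _ => ?_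
    exact mul_le_mul_of_nonneg_left
      (Wle M (Gseq M p i) M.T le_rfl (Qmono M (Gseq M p i) M.T le_rfl) s)
      ENNReal.toReal_nonneg
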